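/- For s = (n+α+1)/2 with n+α > 1, the double series Σ_{k,m≥0} [(s)_k/k!]²·[(s+1/2)_m/m!]²·B(k+1, n+α-1)·B(m+3/2, k+n+α)·x^m, for 0 ≤ x < 1, equals [Γ(n+α-1)/Γ((n+α)/2+1)²]·Σ_{m=0}^∞ Γ(m+1/2)Γ(m+3/2)/(m!)²·x^m. -/

import Mathlib

open Real MeasureTheory Set Filter

/-- Pochhammer symbol `(a)_k = a(a+1)⋯(a+k-1)` for real `a`. -/
noncomputable def poch (a : ℝ) (k : ℕ) : ℝ := (ascPochhammer ℝ k).eval a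

/-- Beta function `B(x,y) = Γ(x)Γ(y)/Γ(x+y)`. -/
noncomputable def betaFun (x y : ℝ) : ℝ :=
  Real.Gamma x * Real.Gamma y / Real.Gamma (x + y)

lemma poch_zero (a : ℝ) : poch a 0 = 1 := by simp [poch]

lemma poch_succ (a : ℝ) (k : ℕ) : poch a (k + 1) = poch a k * (a + k) := by
  simp [poch, ascPochhammer_succ_eval]

lemma poch_pos {a : ℝ} (ha : 0 < a) (k : ℕ) : 0 < poch a k := by
  induction k with
  | zero => simp [poch_zero]
  | succ k ih => rw [poch_succ]; positivity

lemma Gamma_poch {a : ℝ} (ha : 0 < a) (k : ℕ) :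
    Real.Gamma (a + k) = Real.Gamma a * poch a k := by
  induction k with
  | zero => simp [poch_zero]
  | succ k ih =>
      have h1 : a + (k + 1 : ℕ) = (a + k) + 1 := by push_cast; ring
      rw [h1, Real.Gamma_add_one (by positivity), ih, poch_succ]
      ring

lemma poch_mono {a b : ℝ} (ha : 0 < a) (hab : a ≤ b) (k : ℕ) : poch a k ≤ poch b k := by
  induction k with
  | zero => simp [poch_zero]
  | succ k ih =>
      rw [poch_succ, poch_succ]
      have := poch_pos ha k
      apply mul_le_mul ih (by linarith) (by positivity) (le_of_lt (poch_pos (by linarith) k))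

lemma poch_one (k : ℕ) : poch 1 k = k.factorial := by
  induction k with
  | zero => simp [poch_zero]
  | succ k ih => rw [poch_succ, ih, Nat.factorial_succ]; push_cast; ring

lemma poch_two (k : ℕ) : poch 2 k = (k+1).factorial := by
  induction k with
  | zero => simp [poch_zero]
  | succ k ih => rw [poch_succ, ih, Nat.factorial_succ (k+1)]; push_cast; ring

/-- Swapping an infinite sum with an integral, for nonnegative functions. -/
lemma hasSum_integral_swap {μ : Measure ℝ} {f : ℕ → ℝ → ℝ} {F : ℝ → ℝ}
    (hf : ∀ k, Integrable (f k) μ) (h0 : ∀ k, ∀ᵐ x ∂μ, 0 ≤ f k x)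
    (hF : Integrable F μ) (hsum : ∀ᵐ x ∂μ, HasSum (fun k => f k x) (F x)) :
    HasSum (fun k => ∫ x, f k x ∂μ) (∫ x, F x ∂μ) := by
  have hF0 : 0 ≤ᵐ[μ] F := by
    filter_upwards [hsum, ae_all_iff.2 h0] with x hx h0x
    exact hx.nonneg h0x
  have hmeas : ∀ k, AEMeasurable (fun x => ENNReal.ofReal (f k x)) μ :=
    fun k => (hf k).aemeasurable.ennreal_ofReal
  have key : ∑' k, ENNReal.ofReal (∫ x, f k x ∂μ) = ENNReal.ofReal (∫ x, F x ∂μ) := by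
    have h1 : ∀ k, ENNReal.ofReal (∫ x, f k x ∂μ) = ∫⁻ x, ENNReal.ofReal (f k x) ∂μ :=
      fun k => ofReal_integral_eq_lintegral_ofReal (hf k) (h0 k)
    simp_rw [h1]
    rw [← lintegral_tsum hmeas, ofReal_integral_eq_lintegral_ofReal hF hF0]
    refine lintegral_congr_ae ?_
    filter_upwards [hsum, ae_all_iff.2 h0] with x hx h0x
    rw [← ENNReal.ofReal_tsum_of_nonneg h0x hx.summable, hx.tsum_eq]
  have hnn : ∀ k, 0 ≤ ∫ x, f k x ∂μ := fun k => integral_nonneg_of_ae (h0 k)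
  have hs : Summable fun k => ∫ x, f k x ∂μ := by
    refine (ENNReal.summable_toReal (by rw [key]; exact ENNReal.ofReal_ne_top)).congr
      fun k => ENNReal.toReal_ofReal (hnn k)
  have ht : ∑' k, ∫ x, f k x ∂μ = ∫ x, F x ∂μ := by
    have h2 := ENNReal.tsum_toReal_eq
      (f := fun k => ENNReal.ofReal (∫ x, f k x ∂μ)) (fun k => ENNReal.ofReal_ne_top)
    rw [key, ENNReal.toReal_ofReal (integral_nonneg_of_ae hF0)] at h2
    rw [h2]
    exact tsum_congr fun k => (ENNReal.toReal_ofReal (hnn k)).symm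
  exact ht ▸ hs.hasSum

/-- The generalized binomial series `∑ (s)_k t^k / k! = (1-t)^{-s}` for `0 ≤ t < 1`. -/
lemma binomial_hasSum {s t : ℝ} (hs : 0 < s) (ht0 : 0 ≤ t) (ht1 : t < 1) :
    HasSum (fun k : ℕ => poch s k / k.factorial * t ^ k) ((1 - t) ^ (-s)) := by
  have h1t : 0 < 1 - t := by linarith
  set μ : Measure ℝ := volume.restrict (Ioi 0) with hμ
  set f : ℕ → ℝ → ℝ := fun k x => t ^ k / k.factorial * (Real.exp (-x) * x ^ (s + k - 1))
    with hf_def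
  set F : ℝ → ℝ := fun x => x ^ (s - 1) * Real.exp (-((1 - t) * x)) with hF_def
  have hspos : ∀ k : ℕ, (0:ℝ) < s + k := fun k => by positivity
  have hf : ∀ k, Integrable (f k) μ :=
    fun k => (Real.GammaIntegral_convergent (hspos k)).const_mul _
  have h0 : ∀ k, ∀ᵐ x ∂μ, 0 ≤ f k x := by
    intro k
    refine Filter.eventually_of_mem (self_mem_ae_restrict measurableSet_Ioi) fun x hx => ?_
    have hx' : (0:ℝ) < x := hx
    exact mul_nonneg (by positivity)
      (mul_nonneg (Real.exp_nonneg _) (Real.rpow_nonneg hx'.le _))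
  have hF : Integrable F μ := by
    have := integrableOn_rpow_mul_exp_neg_mul_rpow (p := 1) (s := s - 1) (b := 1 - t)
      (by linarith) zero_lt_one h1t
    simp only [Real.rpow_one, neg_mul] at this
    exact this
  have hsum : ∀ᵐ x ∂μ, HasSum (fun k => f k x) (F x) := by
    refine Filter.eventually_of_mem (self_mem_ae_restrict measurableSet_Ioi) fun x hx => ?_
    have hx' : (0:ℝ) < x := hx
    have hexp : HasSum (fun k : ℕ => (t * x) ^ k / k.factorial) (Real.exp (t * x)) := by
      rw [Real.exp_eq_exp_ℝ]
      exact NormedSpace.expSeries_div_hasSum_exp (t * x)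
    have := hexp.mul_left (Real.exp (-x) * x ^ (s - 1))
    convert this using 1
    · rfl
    · funext k
      have he : s + (k:ℝ) - 1 = (s - 1) + (k:ℝ) := by ring
      rw [hf_def]
      simp only
      rw [he, Real.rpow_add hx', Real.rpow_natCast, mul_pow]
      ring
    · rw [hF_def]
      simp only
      rw [show -((1 - t) * x) = -x + t * x by ring, Real.exp_add]
      ring
  have H := hasSum_integral_swap hf h0 hF hsum
  have hIk : ∀ k : ℕ, ∫ x, f k x ∂μ = t ^ k / k.factorial * (Real.Gamma s * poch s k) := by
    intro k
    rw [hf_def]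
    simp only
    rw [MeasureTheory.integral_const_mul, ← Real.Gamma_eq_integral (hspos k), Gamma_poch hs]
  have hIF : ∫ x, F x ∂μ = (1 - t) ^ (-s) * Real.Gamma s := by
    rw [hF_def]
    have := Real.integral_rpow_mul_exp_neg_mul_Ioi hs h1t
    rw [hμ]
    rw [this, one_div, Real.inv_rpow h1t.le, ← Real.rpow_neg h1t.le]
  rw [hIF] at H
  simp_rw [hIk] at H
  have H2 := H.div_const (Real.Gamma s)
  have hΓ : Real.Gamma s ≠ 0 := (Real.Gamma_pos_of_pos hs).ne'
  convert H2 using 1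
  · rfl
  · funext k
    field_simp
  · field_simp

lemma beta_fun_eq {a b : ℝ} (ha : 0 < a) (hb : 0 < b) :
    ∀ x ∈ Ioo (0:ℝ) 1,
      ((x:ℂ) ^ ((a:ℂ) - 1) * (1 - (x:ℂ)) ^ ((b:ℂ) - 1)) =
        ((x ^ (a - 1) * (1 - x) ^ (b - 1) : ℝ) : ℂ) := by
  intro x hx
  have h1 : ((a:ℂ) - 1) = ((a - 1 : ℝ) : ℂ) := by push_cast; ring
  have h2 : ((b:ℂ) - 1) = ((b - 1 : ℝ) : ℂ) := by push_cast; ring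
  have h3 : (1 - (x:ℂ)) = ((1 - x : ℝ) : ℂ) := by push_cast; ring
  rw [h1, h2, h3, ← Complex.ofReal_cpow hx.1.le, ← Complex.ofReal_cpow (by linarith [hx.2])]
  push_cast
  ring

lemma integrableOn_beta {a b : ℝ} (ha : 0 < a) (hb : 0 < b) :
    IntegrableOn (fun x : ℝ => x ^ (a - 1) * (1 - x) ^ (b - 1)) (Ioo 0 1) := by
  have hC : IntegrableOn
      (fun x : ℝ => (x:ℂ) ^ ((a:ℂ) - 1) * (1 - (x:ℂ)) ^ ((b:ℂ) - 1)) (Ioo 0 1) := by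
    have := (Complex.betaIntegral_convergent (u := a) (v := b) (by simpa using ha)
      (by simpa using hb))
    exact ((intervalIntegrable_iff_integrableOn_Ioc_of_le zero_le_one).mp this).mono_set
      Ioo_subset_Ioc_self
  have := hC.re
  refine (IntegrableOn.congr_fun this ?_ measurableSet_Ioo)
  intro x hx
  simp only [RCLike.re_to_complex]
  rw [beta_fun_eq ha hb x hx, Complex.ofReal_re]

lemma integral_beta {a b : ℝ} (ha : 0 < a) (hb : 0 < b) :
    ∫ x in Ioo (0:ℝ) 1, x ^ (a - 1) * (1 - x) ^ (b - 1)
      = Real.Gamma a * Real.Gamma b / Real.Gamma (a + b) := by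
  have hab : (0:ℝ) < a + b := by linarith
  have hΓ : Real.Gamma (a + b) ≠ 0 := (Real.Gamma_pos_of_pos hab).ne'
  have hcomplex := Complex.Gamma_mul_Gamma_eq_betaIntegral (s := (a:ℂ)) (t := (b:ℂ))
    (by simpa using ha) (by simpa using hb)
  have hBI : Complex.betaIntegral a b
      = ((∫ x in Ioo (0:ℝ) 1, x ^ (a - 1) * (1 - x) ^ (b - 1) : ℝ) : ℂ) := by
    rw [Complex.betaIntegral, intervalIntegral.integral_of_le zero_le_one,
      MeasureTheory.integral_Ioc_eq_integral_Ioo]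
    rw [setIntegral_congr_fun measurableSet_Ioo (beta_fun_eq ha hb)]
    exact integral_ofReal
  rw [hBI] at hcomplex
  have hsum : ((a:ℂ) + b) = ((a + b : ℝ) : ℂ) := by push_cast; ring
  rw [hsum, Complex.Gamma_ofReal, Complex.Gamma_ofReal, Complex.Gamma_ofReal] at hcomplex
  have : ((Real.Gamma a * Real.Gamma b : ℝ) : ℂ)
      = ((Real.Gamma (a + b) * ∫ x in Ioo (0:ℝ) 1, x ^ (a - 1) * (1 - x) ^ (b - 1) : ℝ) : ℂ) := by
    push_cast
    exact hcomplex
  have hreal := Complex.ofReal_inj.mp this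
  field_simp
  linarith [hreal]

/-- Gauss-type evaluation: `∑ (s)_k^2 / (k! Γ(2s+e+k)) = Γ(e)/Γ(s+e)^2`. -/
lemma inner_hasSum {s e : ℝ} (hs : 0 < s) (he : 0 < e) :
    HasSum (fun k : ℕ => poch s k ^ 2 / (k.factorial * Real.Gamma (2*s + e + k)))
      (Real.Gamma e / Real.Gamma (s + e) ^ 2) := by
  set μ : Measure ℝ := volume.restrict (Ioo 0 1) with hμ
  set f : ℕ → ℝ → ℝ := fun k t =>
    poch s k / k.factorial * (t ^ (s + k - 1) * (1 - t) ^ (s + e - 1)) with hf_def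
  set F : ℝ → ℝ := fun t => t ^ (s - 1) * (1 - t) ^ (e - 1) with hF_def
  have hpk : ∀ k : ℕ, (0:ℝ) < s + k := fun k => by positivity
  have hf : ∀ k, Integrable (f k) μ :=
    fun k => (integrableOn_beta (a := s + k) (b := s + e) (hpk k) (by positivity)).const_mul _
  have h0 : ∀ k, ∀ᵐ x ∂μ, 0 ≤ f k x := by
    intro k
    refine Filter.eventually_of_mem (self_mem_ae_restrict measurableSet_Ioo) fun x hx => ?_
    have h1 : (0:ℝ) < x := hx.1
    have h2 : (0:ℝ) < 1 - x := by linarith [hx.2]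
    have := poch_pos hs k
    exact mul_nonneg (by positivity)
      (mul_nonneg (Real.rpow_nonneg h1.le _) (Real.rpow_nonneg h2.le _))
  have hF : Integrable F μ := integrableOn_beta hs he
  have hsum : ∀ᵐ x ∂μ, HasSum (fun k => f k x) (F x) := by
    refine Filter.eventually_of_mem (self_mem_ae_restrict measurableSet_Ioo) fun t ht => ?_
    have h1 : (0:ℝ) < t := ht.1
    have h2 : (0:ℝ) < 1 - t := by linarith [ht.2]
    have H := (binomial_hasSum hs h1.le ht.2).mul_left (t ^ (s - 1) * (1 - t) ^ (s + e - 1))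
    convert H using 1
    · rfl
    · funext k
      rw [hf_def]
      simp only
      rw [show s + (k:ℝ) - 1 = (s - 1) + (k:ℝ) by ring, Real.rpow_add h1, Real.rpow_natCast]
      ring
    · rw [hF_def]
      simp only
      rw [mul_assoc, ← Real.rpow_add h2, show s + e - 1 + -s = e - 1 by ring]
  have H := hasSum_integral_swap hf h0 hF hsum
  have hIk : ∀ k : ℕ, ∫ x, f k x ∂μ
      = Real.Gamma s * Real.Gamma (s + e) *
        (poch s k ^ 2 / (k.factorial * Real.Gamma (2*s + e + k))) := by
    intro k
    rw [hf_def]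
    simp only
    rw [hμ, MeasureTheory.integral_const_mul, integral_beta (hpk k) (by positivity),
      Gamma_poch hs, show s + (k:ℝ) + (s + e) = 2*s + e + k by ring]
    have h3 := (Real.Gamma_pos_of_pos (show (0:ℝ) < 2*s + e + k by positivity)).ne'
    have h4 : (k.factorial : ℝ) ≠ 0 := Nat.cast_ne_zero.mpr k.factorial_ne_zero
    field_simp
  have hIF : ∫ x, F x ∂μ = Real.Gamma s * Real.Gamma e / Real.Gamma (s + e) := by
    rw [hF_def, hμ]
    exact integral_beta hs he
  rw [hIF] at H
  simp_rw [hIk] at H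
  have H2 := H.div_const (Real.Gamma s * Real.Gamma (s + e))
  have h5 : Real.Gamma s ≠ 0 := (Real.Gamma_pos_of_pos hs).ne'
  have h6 : Real.Gamma (s + e) ≠ 0 := (Real.Gamma_pos_of_pos (by positivity)).ne'
  convert H2 using 1
  · rfl
  · funext k
    field_simp
  · field_simp

lemma stuff_summable {x : ℝ} (hx0 : 0 ≤ x) (hx1 : x < 1) :
    Summable (fun m : ℕ =>
      Real.Gamma (m + 1/2) * Real.Gamma (m + 3/2) / (Nat.factorial m : ℝ)^2 * x ^ m) := by
  have hB : Summable (fun m : ℕ =>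
      Real.Gamma (1/2) * Real.Gamma (3/2) * (((m:ℝ) + 1) * x ^ m)) := by
    have h1 : Summable (fun m : ℕ => (m:ℝ) ^ 1 * x ^ m) :=
      summable_pow_mul_geometric_of_norm_lt_one 1
        (by rwa [Real.norm_eq_abs, abs_of_nonneg hx0])
    have h2 : Summable (fun m : ℕ => x ^ m) := summable_geometric_of_lt_one hx0 hx1
    exact ((h1.add h2).mul_left (Real.Gamma (1/2) * Real.Gamma (3/2))).congr
      fun m => by push_cast; ring
  refine Summable.of_nonneg_of_le (fun m => ?_) (fun m => ?_) hB
  · have g1 : 0 < Real.Gamma ((m:ℝ) + 1/2) := Real.Gamma_pos_of_pos (by positivity)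
    have g2 : 0 < Real.Gamma ((m:ℝ) + 3/2) := Real.Gamma_pos_of_pos (by positivity)
    have g3 := pow_nonneg hx0 m
    positivity
  · have e1 : Real.Gamma ((m:ℝ) + 1/2) = Real.Gamma (1/2) * poch (1/2) m := by
      rw [show ((m:ℝ) + 1/2) = 1/2 + m by ring, Gamma_poch (by norm_num : (0:ℝ) < 1/2)]
    have e2 : Real.Gamma ((m:ℝ) + 3/2) = Real.Gamma (3/2) * poch (3/2) m := by
      rw [show ((m:ℝ) + 3/2) = 3/2 + m by ring, Gamma_poch (by norm_num : (0:ℝ) < 3/2)]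
    have b1 : poch (1/2) m ≤ (m.factorial : ℝ) := by
      rw [← poch_one]; exact poch_mono (by norm_num) (by norm_num) m
    have b2 : poch (3/2) m ≤ ((m+1).factorial : ℝ) := by
      rw [← poch_two]; exact poch_mono (by norm_num) (by norm_num) m
    have b3 : poch (1/2) m * poch (3/2) m ≤ ((m:ℝ) + 1) * (m.factorial : ℝ)^2 := by
      have h4 := mul_le_mul b1 b2 (poch_pos (by norm_num : (0:ℝ) < 3/2) m).le
        (Nat.cast_nonneg _)
      have h7 : ((m+1).factorial : ℝ) = ((m:ℝ) + 1) * m.factorial := by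
        rw [Nat.factorial_succ]; push_cast; ring
      calc poch (1/2) m * poch (3/2) m ≤ (m.factorial : ℝ) * ((m+1).factorial : ℝ) := h4
        _ = ((m:ℝ) + 1) * (m.factorial : ℝ)^2 := by rw [h7]; ring
    have c0 : (0:ℝ) < (m.factorial : ℝ) := Nat.cast_pos.mpr m.factorial_pos
    have g12 : 0 < Real.Gamma (1/2 : ℝ) := Real.Gamma_pos_of_pos (by norm_num)
    have g32 : 0 < Real.Gamma (3/2 : ℝ) := Real.Gamma_pos_of_pos (by norm_num)
    have lhs_eq : Real.Gamma (1/2) * poch (1/2) m * (Real.Gamma (3/2) * poch (3/2) m)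
          / (m.factorial:ℝ)^2 * x^m
        = (poch (1/2) m * poch (3/2) m)
          * (Real.Gamma (1/2) * Real.Gamma (3/2) * x^m / (m.factorial:ℝ)^2) := by
      field_simp
    have rhs_eq : Real.Gamma (1/2) * Real.Gamma (3/2) * (((m:ℝ) + 1) * x^m)
        = (((m:ℝ) + 1) * (m.factorial:ℝ)^2)
          * (Real.Gamma (1/2) * Real.Gamma (3/2) * x^m / (m.factorial:ℝ)^2) := by
      field_simp
    rw [e1, e2, lhs_eq, rhs_eq]
    exact mul_le_mul_of_nonneg_right b3 (by positivity)


/-- The general term of the double series, with `c = n + α`. -/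
noncomputable def Tterm (c x : ℝ) (k m : ℕ) : ℝ :=
  (poch ((c+1)/2) k / (Nat.factorial k : ℝ))^2 *
  (poch ((c+1)/2 + 1/2) m / (Nat.factorial m : ℝ))^2 *
  betaFun (k + 1) (c - 1) * betaFun (m + 3/2) (k + c) * x ^ m

lemma main_aux (c : ℝ) (hc : 1 < c) (x : ℝ) (hx0 : 0 ≤ x) (hx1 : x < 1) :
    ∑' p : ℕ × ℕ, Tterm c x p.1 p.2
      = Real.Gamma (c - 1) / (Real.Gamma (c/2 + 1))^2 *
          ∑' m : ℕ, Real.Gamma (m + 1/2) * Real.Gamma (m + 3/2)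
            / (Nat.factorial m : ℝ)^2 * x ^ m := by
  have hs : (0:ℝ) < (c+1)/2 := by linarith
  set s : ℝ := (c+1)/2 with hsdef
  set D : ℝ := Real.Gamma (c - 1) / (Real.Gamma (c/2 + 1))^2 with hD
  set stuff : ℕ → ℝ := fun m =>
    Real.Gamma (m + 1/2) * Real.Gamma (m + 3/2) / (Nat.factorial m : ℝ)^2 * x ^ m
    with hstuffdef
  set C : ℕ → ℝ := fun m =>
    Real.Gamma (c - 1) * Real.Gamma (m + 3/2)
      * (poch (s + 1/2) m / (Nat.factorial m : ℝ))^2 * x ^ m with hC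
  set G : ℕ → ℝ := fun m =>
    C m * (Real.Gamma (m + 1/2) / Real.Gamma (s + (m + 1/2))^2) with hG
  have hfacne : ∀ j : ℕ, (Nat.factorial j : ℝ) ≠ 0 :=
    fun j => Nat.cast_ne_zero.mpr j.factorial_ne_zero
  have hΓc1 : 0 < Real.Gamma (c - 1) := Real.Gamma_pos_of_pos (by linarith)
  -- rewrite the general term
  have hTeq : ∀ m k : ℕ, Tterm c x k m
      = C m * (poch s k ^ 2 / (k.factorial * Real.Gamma (2*s + ((m:ℝ) + 1/2) + k))) := by
    intro m k
    have h2 : ((k:ℝ) + 1 + (c - 1)) = ((k:ℝ) + c) := by ring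
    have h3 : ((m:ℝ) + 3/2 + ((k:ℝ) + c)) = 2*s + ((m:ℝ) + 1/2) + k := by
      rw [hsdef]; ring
    have h4 : Real.Gamma ((k:ℝ) + c) ≠ 0 := (Real.Gamma_pos_of_pos (by positivity)).ne'
    have h5 : Real.Gamma (2*s + ((m:ℝ) + 1/2) + k) ≠ 0 :=
      (Real.Gamma_pos_of_pos (by positivity)).ne'
    rw [Tterm, betaFun, betaFun, h2, h3, Real.Gamma_nat_eq_factorial, hC]
    simp only
    field_simp
    rw [hsdef]
    ring_nf
  -- sum over k for each fixed m
  have hmkey : ∀ m : ℕ, HasSum (fun k => Tterm c x k m) (G m) := by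
    intro m
    have he : (0:ℝ) < (m:ℝ) + 1/2 := by positivity
    have H := (inner_hasSum hs he).mul_left (C m)
    rw [show (fun k => Tterm c x k m)
      = (fun k => C m * (poch s k ^ 2 / (k.factorial * Real.Gamma (2*s + ((m:ℝ) + 1/2) + k))))
      from funext (hTeq m)]
    rw [hG]
    exact H
  have hTnn : ∀ k m : ℕ, 0 ≤ Tterm c x k m := by
    intro k m
    rw [hTeq m k]
    have h1 : 0 < Real.Gamma ((m:ℝ) + 3/2) := Real.Gamma_pos_of_pos (by positivity)
    have hx : 0 ≤ x ^ m := pow_nonneg hx0 m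
    have hCnn : 0 ≤ C m := by
      rw [hC]
      exact mul_nonneg (mul_nonneg (mul_nonneg hΓc1.le h1.le) (sq_nonneg _)) hx
    have h5 : 0 < Real.Gamma (2*s + ((m:ℝ) + 1/2) + k) :=
      Real.Gamma_pos_of_pos (by positivity)
    exact mul_nonneg hCnn (div_nonneg (sq_nonneg _) (by positivity))
  have hGeq : ∀ m : ℕ, G m = D * stuff m := by
    intro m
    have hpos : (0:ℝ) < c/2 + 1 := by linarith
    have e2 : s + ((m:ℝ) + 1/2) = c/2 + 1 + m := by rw [hsdef]; ring
    have e1 : poch (s + 1/2) m = Real.Gamma (c/2 + 1 + m) / Real.Gamma (c/2 + 1) := by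
      rw [show s + 1/2 = c/2 + 1 by rw [hsdef]; ring, Gamma_poch hpos m]
      field_simp [(Real.Gamma_pos_of_pos hpos).ne']
    have hg1 : Real.Gamma (c/2 + 1) ≠ 0 := (Real.Gamma_pos_of_pos hpos).ne'
    have hg2 : Real.Gamma (c/2 + 1 + m) ≠ 0 := (Real.Gamma_pos_of_pos (by positivity)).ne'
    rw [hG, hC, hD, hstuffdef]
    simp only
    rw [e1, e2]
    field_simp
  have hstuffsum : Summable stuff := stuff_summable hx0 hx1
  have hGsum : Summable G := (hstuffsum.mul_left D).congr fun m => (hGeq m).symm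
  have hTsumS : Summable (fun q : ℕ × ℕ => Tterm c x q.2 q.1) := by
    refine (summable_prod_of_nonneg fun q => hTnn q.2 q.1).2 ⟨fun m => (hmkey m).summable, ?_⟩
    exact hGsum.congr fun m => ((hmkey m).tsum_eq).symm
  calc ∑' p : ℕ × ℕ, Tterm c x p.1 p.2
      = ∑' q : ℕ × ℕ, Tterm c x q.2 q.1 :=
        by exact ((Equiv.prodComm ℕ ℕ).tsum_eq (fun q : ℕ × ℕ => Tterm c x q.2 q.1))
    _ = ∑' m : ℕ, ∑' k : ℕ, Tterm c x k m := Summable.tsum_prod' hTsumS (fun m => (hmkey m).summable)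
    _ = ∑' m : ℕ, G m := tsum_congr fun m => (hmkey m).tsum_eq
    _ = ∑' m : ℕ, D * stuff m := tsum_congr hGeq
    _ = D * ∑' m : ℕ, stuff m := tsum_mul_left

theorem double_series_eval (n α : ℝ) (h : n + α > 1) (x : ℝ) (hx0 : 0 ≤ x) (hx1 : x < 1) :
    ∑' p : ℕ × ℕ,
        (poch ((n+α+1)/2) p.1 / (Nat.factorial p.1 : ℝ))^2 *
        (poch ((n+α+1)/2 + 1/2) p.2 / (Nat.factorial p.2 : ℝ))^2 *
        betaFun (p.1 + 1) (n + α - 1) * betaFun (p.2 + 3/2) (p.1 + n + α) * x ^ p.2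
      = Real.Gamma (n + α - 1) / (Real.Gamma ((n+α)/2 + 1))^2 *
          ∑' m : ℕ, Real.Gamma (m + 1/2) * Real.Gamma (m + 3/2) / (Nat.factorial m : ℝ)^2 * x ^ m := by
  exact (tsum_congr (fun p => by simp only [Tterm, ← add_assoc])).trans
    (main_aux (n + α) h x hx0 hx1)
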